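/- Let P ∈ ℝ^{N×N} be a row-stochastic matrix and let α ∈ (0,1). Then the following are equivalent: (i) for every strict total order ≺ on {1,...,N} there exists a probability vector v such that the PageRank vector satisfies π(α,v)_i < π(α,v)_j whenever i ≺ j (ranking control); (ii) 1/α > max_j Σ_{i=1}^N P_{ij}. -/

import Mathlib

open Matrix

/-- `P` is row-stochastic: nonnegative entries, each row summing to 1. -/
def IsStochastic {N : ℕ} (P : Matrix (Fin N) (Fin N) ℝ) : Prop :=
  (∀ i j, 0 ≤ P i j) ∧ ∀ i, ∑ j, P i j = 1

/-- `v` is a probability vector: strictly positive entries summing to 1. -/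
def IsProbVec {N : ℕ} (v : Fin N → ℝ) : Prop :=
  (∀ i, 0 < v i) ∧ ∑ i, v i = 1

/-- The Google matrix `αP + (1-α) e vᵀ`. -/
def googleMatrix {N : ℕ} (α : ℝ) (P : Matrix (Fin N) (Fin N) ℝ) (v : Fin N → ℝ) :
    Matrix (Fin N) (Fin N) ℝ :=
  α • P + (1 - α) • Matrix.of fun _ j => v j

open Finset in
lemma key_construction {N : ℕ} (hN : 0 < N) (P : Matrix (Fin N) (Fin N) ℝ)
    (hP : IsStochastic P) (α : ℝ) (hα : α ∈ Set.Ioo (0:ℝ) 1)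
    (w : Fin N → ℝ) (hw1 : ∀ i, 0 < w i)
    (hwv : ∀ j, α * ∑ i, w i * P i j < w j) :
    ∃ v π : Fin N → ℝ, IsProbVec v ∧ IsProbVec π ∧
      Matrix.vecMul π (googleMatrix α P v) = π ∧
      ∀ i j, w i < w j → π i < π j := by
  have hne : Nonempty (Fin N) := ⟨⟨0, hN⟩⟩
  have hW : 0 < ∑ i, w i := Finset.sum_pos (fun i _ => hw1 i) Finset.univ_nonempty
  set W := ∑ i, w i with hWdef
  set π : Fin N → ℝ := fun i => w i / W with hπdef
  have hπpos : ∀ i, 0 < π i := fun i => div_pos (hw1 i) hW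
  have hπsum : ∑ i, π i = 1 := by
    simp only [hπdef]
    rw [← Finset.sum_div, ← hWdef, div_self (ne_of_gt hW)]
  have h1α : (0:ℝ) < 1 - α := by linarith [hα.2]
  set S : Fin N → ℝ := fun j => ∑ i, π i * P i j with hSdef
  have hSW : ∀ j, S j = (∑ i, w i * P i j) / W := by
    intro j
    simp only [hSdef, hπdef, div_mul_eq_mul_div]
    rw [← Finset.sum_div]
  set v : Fin N → ℝ := fun j => (π j - α * S j) / (1 - α) with hvdef
  have hvpos : ∀ j, 0 < v j := by
    intro j
    apply div_pos _ h1α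
    rw [hSW j]
    have : π j - α * ((∑ i, w i * P i j) / W) = (w j - α * ∑ i, w i * P i j) / W := by
      simp only [hπdef]; field_simp
    rw [this]
    exact div_pos (by linarith [hwv j]) hW
  have hSsum : ∑ j, S j = 1 := by
    simp only [hSdef]
    rw [Finset.sum_comm]
    have : ∀ i, ∑ j, π i * P i j = π i := by
      intro i; rw [← Finset.mul_sum, hP.2 i, mul_one]
    simp_rw [this]; exact hπsum
  have hvsum : ∑ j, v j = 1 := by
    simp only [hvdef]
    rw [← Finset.sum_div, Finset.sum_sub_distrib, hπsum, ← Finset.mul_sum, hSsum]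
    field_simp
  refine ⟨v, π, ⟨hvpos, hvsum⟩, ⟨hπpos, hπsum⟩, ?_, ?_⟩
  · funext j
    simp only [Matrix.vecMul, dotProduct, googleMatrix, Matrix.add_apply,
      Matrix.smul_apply, Matrix.of_apply, smul_eq_mul]
    have : ∀ i, π i * (α * P i j + (1 - α) * v j)
        = α * (π i * P i j) + (1 - α) * v j * π i := by intro i; ring
    simp_rw [this]
    rw [Finset.sum_add_distrib, ← Finset.mul_sum, ← Finset.mul_sum, hπsum, mul_one]
    show α * S j + (1 - α) * v j = π j
    simp only [hvdef]
    field_simp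
    ring
  · intro i j hij
    simp only [hπdef]; gcongr

/-- For a row-stochastic `P` on `N ≥ 1` nodes and `α ∈ (0,1)`, the following
are equivalent: (i) for every strict total order `≺` on the nodes there is a probability
vector `v` whose PageRank vector `π` (the probability vector fixed by the Google matrix)
satisfies `π i < π j` whenever `i ≺ j`; (ii) `1/α > max_j ∑_i P_{ij}`, i.e.
`∑_i P_{ij} < 1/α` for every column `j`. -/
theorem ranking_control_characterization {N : ℕ} (hN : 0 < N)
    (P : Matrix (Fin N) (Fin N) ℝ) (hP : IsStochastic P)
    (α : ℝ) (hα : α ∈ Set.Ioo (0 : ℝ) 1) :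
    (∀ r : Fin N → Fin N → Prop, IsStrictTotalOrder (Fin N) r →
        ∃ v π : Fin N → ℝ, IsProbVec v ∧ IsProbVec π ∧
          Matrix.vecMul π (googleMatrix α P v) = π ∧
          ∀ i j, r i j → π i < π j) ↔
      (∀ j, ∑ i, P i j < 1 / α) := by
  classical
  have hne : Nonempty (Fin N) := ⟨⟨0, hN⟩⟩
  obtain ⟨hα0, hα1⟩ := hα
  constructor
  · -- (i) → (ii)
    intro h j0
    by_contra hle
    push_neg at hle
    set key : Fin N → ℕ := fun i => if i = j0 then 0 else (i : ℕ) + 1 with hkey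
    have hkeyinj : Function.Injective key := by
      intro a b hab
      simp only [hkey] at hab
      by_cases ha : a = j0 <;> by_cases hb : b = j0
      · rw [ha, hb]
      · rw [if_pos ha, if_neg hb] at hab; omega
      · rw [if_neg ha, if_pos hb] at hab; omega
      · rw [if_neg ha, if_neg hb] at hab
        exact Fin.val_injective (by omega)
    set r : Fin N → Fin N → Prop := fun a b => key a < key b with hr
    haveI hT : IsTrans (Fin N) r := ⟨fun a b c => Nat.lt_trans⟩
    haveI hI : IsIrrefl (Fin N) r := ⟨fun a => Nat.lt_irrefl _⟩
    haveI hTr : IsTrichotomous (Fin N) r := by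
      constructor
      intro a b hab hba
      rcases lt_trichotomy (key a) (key b) with h'|h'|h'
      · exact absurd h' hab
      · exact hkeyinj h'
      · exact absurd h' hba
    haveI hSO : IsStrictOrder (Fin N) r := {}
    have hsto : IsStrictTotalOrder (Fin N) r := {}
    obtain ⟨v, π, hv, hπ, hfix, hord⟩ := h r hsto
    have hmin : ∀ i, π j0 ≤ π i := by
      intro i
      rcases eq_or_ne i j0 with h'|h'
      · rw [h']
      · refine (hord j0 i ?_).le
        show key j0 < key i
        have : key j0 = 0 := by simp [hkey]
        have h2 : key i = (i:ℕ) + 1 := by simp [hkey, h']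
        omega
    have heq := congrFun hfix j0
    simp only [Matrix.vecMul, dotProduct, googleMatrix, Matrix.add_apply,
      Matrix.smul_apply, Matrix.of_apply, smul_eq_mul] at heq
    have hexp : ∑ i, π i * (α * P i j0 + (1 - α) * v j0)
        = α * (∑ i, π i * P i j0) + (1 - α) * v j0 := by
      have h1 : ∀ i, π i * (α * P i j0 + (1 - α) * v j0)
          = α * (π i * P i j0) + (1 - α) * v j0 * π i := fun i => by ring
      simp_rw [h1]
      rw [Finset.sum_add_distrib, ← Finset.mul_sum, ← Finset.mul_sum, hπ.2, mul_one]
    rw [hexp] at heq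
    have h1 : π j0 * ∑ i, P i j0 ≤ ∑ i, π i * P i j0 := by
      rw [Finset.mul_sum]
      exact Finset.sum_le_sum fun i _ => mul_le_mul_of_nonneg_right (hmin i) (hP.1 i j0)
    have h2 : 1 ≤ α * ∑ i, P i j0 := by
      have := mul_le_mul_of_nonneg_left hle hα0.le
      calc (1:ℝ) = α * (1/α) := by field_simp
        _ ≤ α * ∑ i, P i j0 := this
    have hbig : π j0 ≤ α * ∑ i, π i * P i j0 :=
      calc π j0 = π j0 * 1 := (mul_one _).symm
        _ ≤ π j0 * (α * ∑ i, P i j0) := mul_le_mul_of_nonneg_left h2 (hπ.1 j0).le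
        _ = α * (π j0 * ∑ i, P i j0) := by ring
        _ ≤ α * ∑ i, π i * P i j0 := mul_le_mul_of_nonneg_left h1 hα0.le
    have hvpos : 0 < (1 - α) * v j0 := mul_pos (by linarith) (hv.1 j0)
    linarith
  · -- (ii) → (i)
    intro hcol r hsto
    set f : Fin N → ℕ := fun i => (Finset.univ.filter (fun k => r k i)).card with hf
    have hfmono : ∀ i j, r i j → f i < f j := by
      intro i j hij
      apply Finset.card_lt_card
      constructor
      · intro k hk
        simp only [Finset.mem_filter, Finset.mem_univ, true_and] at hk ⊢
        exact hsto.trans _ _ _ hk hij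
      · intro hsub
        have hi : i ∈ Finset.univ.filter (fun k => r k j) := by
          simp only [Finset.mem_filter, Finset.mem_univ, true_and]; exact hij
        have := hsub hi
        simp only [Finset.mem_filter, Finset.mem_univ, true_and] at this
        exact hsto.irrefl i this
    have hfN : ∀ i, (f i : ℝ) ≤ N := by
      intro i
      have : f i ≤ N := le_trans (Finset.card_filter_le _ _) (by simp)
      exact_mod_cast this
    set M : ℝ := Finset.univ.sup' Finset.univ_nonempty (fun j => ∑ i, P i j) with hM
    have hMj : ∀ j, ∑ i, P i j ≤ M := by
      intro j; rw [hM]; exact Finset.le_sup' (fun j => ∑ i, P i j) (Finset.mem_univ j)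
    have hM0 : 0 ≤ M := le_trans
      (Finset.sum_nonneg fun i _ => hP.1 i ⟨0, hN⟩) (hMj ⟨0, hN⟩)
    have hMlt : α * M < 1 := by
      have h' : M < 1/α := by
        rw [hM]; exact (Finset.sup'_lt_iff Finset.univ_nonempty).mpr fun j _ => hcol j
      have := mul_lt_mul_of_pos_left h' hα0
      calc α * M < α * (1/α) := this
        _ = 1 := by field_simp
    set D : ℝ := 1 + N * (1 + α * M) with hDdef
    have hD : 0 < D := by
      have h0 : (0:ℝ) ≤ (N:ℝ) := Nat.cast_nonneg N
      have h1 : (0:ℝ) ≤ 1 + α * M := by nlinarith [mul_nonneg hα0.le hM0]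
      nlinarith
    set ε : ℝ := (1 - α * M) / D with hεdef
    have hε : 0 < ε := div_pos (by linarith) hD
    have hεD : ε * D = 1 - α * M := div_mul_cancel₀ _ (ne_of_gt hD)
    set w : Fin N → ℝ := fun i => 1 + ε * (f i : ℝ) with hw
    have hw1 : ∀ i, 0 < w i := by
      intro i
      have := mul_nonneg hε.le (Nat.cast_nonneg (f i))
      show 0 < 1 + ε * (f i : ℝ)
      linarith
    have hεN : (0:ℝ) ≤ ε * N := mul_nonneg hε.le (Nat.cast_nonneg N)
    have hwv : ∀ j, α * ∑ i, w i * P i j < w j := by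
      intro j
      have hwle : ∀ i, w i ≤ 1 + ε * N := by
        intro i
        have h' := hfN i
        have := mul_le_mul_of_nonneg_left h' hε.le
        show 1 + ε * (f i : ℝ) ≤ 1 + ε * N
        linarith
      have h1 : ∑ i, w i * P i j ≤ (1 + ε * N) * ∑ i, P i j := by
        rw [Finset.mul_sum]
        exact Finset.sum_le_sum fun i _ => mul_le_mul_of_nonneg_right (hwle i) (hP.1 i j)
      have h2 : (1 + ε * N) * ∑ i, P i j ≤ (1 + ε * N) * M :=
        mul_le_mul_of_nonneg_left (hMj j) (by linarith)
      have h3 : α * ((1 + ε * N) * M) < 1 := by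
        have hexpand : ε * D = ε + ε * N + ε * N * (α * M) := by
          rw [hDdef]; ring
        nlinarith [hεD, hε, hεN]
      have hwj : (1:ℝ) ≤ w j := by
        have := mul_nonneg hε.le (Nat.cast_nonneg (f j))
        show (1:ℝ) ≤ 1 + ε * (f j : ℝ)
        linarith
      calc α * ∑ i, w i * P i j ≤ α * ((1 + ε * N) * M) :=
            mul_le_mul_of_nonneg_left (h1.trans h2) hα0.le
        _ < 1 := h3
        _ ≤ w j := hwj
    obtain ⟨v, π, hv, hπ, hfix, hord⟩ :=
      key_construction hN P hP α ⟨hα0, hα1⟩ w hw1 hwv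
    refine ⟨v, π, hv, hπ, hfix, fun i j hij => hord i j ?_⟩
    have h' : (f i : ℝ) < (f j : ℝ) := by exact_mod_cast hfmono i j hij
    have := mul_lt_mul_of_pos_left h' hε
    show 1 + ε * (f i : ℝ) < 1 + ε * (f j : ℝ)
    linarith
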